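/- Let λ > 0 and let η : [0,∞) → ℝ be twice continuously differentiable with η(0) = 0, η'(0) = 1, and (1/2)η''(x) − q(x)η'(x) = −λη(x) for all x ≥ 0. Assume ∫₀^∞ e^{Q(y)} dy = ∞. Then η(x) > 0 for all x > 0 if and only if η is strictly increasing on [0,∞). -/

import Mathlib

open MeasureTheory Set

/-- With `λ > 0`, `η` as in STATEMENT 0, and `∫₀^∞ exp (Q y) dy = ∞`,
`η` is positive on `(0,∞)` iff `η` is strictly increasing on `[0,∞)`. -/
theorem stmt_3 (q Q : ℝ → ℝ) (hq : ContDiffOn ℝ 1 q (Ici 0))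
    (hQ : ∀ y, Q y = ∫ t in (0:ℝ)..y, 2 * q t)
    (lam : ℝ) (hlam : 0 < lam) (η η' η'' : ℝ → ℝ)
    (hη' : ∀ x ∈ Ici (0:ℝ), HasDerivWithinAt η (η' x) (Ici 0) x)
    (hη'' : ∀ x ∈ Ici (0:ℝ), HasDerivWithinAt η' (η'' x) (Ici 0) x)
    (hη''c : ContinuousOn η'' (Ici 0))
    (hη0 : η 0 = 0) (hη'0 : η' 0 = 1)
    (hode : ∀ x ≥ (0:ℝ), (1/2) * η'' x - q x * η' x = -lam * η x)
    (hΛ : ∫⁻ y in Ioi (0:ℝ), ENNReal.ofReal (Real.exp (Q y)) = ⊤) :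
    (∀ x > (0:ℝ), 0 < η x) ↔ StrictMonoOn η (Ici 0) := by
  have hqc : ContinuousOn q (Ici 0) := hq.continuousOn
  have h2qc : ContinuousOn (fun t => 2 * q t) (Ici 0) := continuousOn_const.mul hqc
  have hQe : Q = fun y => ∫ t in (0:ℝ)..y, 2 * q t := funext hQ
  have hint : ∀ b : ℝ, 0 ≤ b → IntervalIntegrable (fun t => 2 * q t) volume 0 b := by
    intro b hb
    apply ContinuousOn.intervalIntegrable
    exact h2qc.mono (by rw [uIcc_of_le hb]; exact Icc_subset_Ici_self)
  have hQd0 : HasDerivWithinAt Q (2 * q 0) (Ici 0) 0 := by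
    rw [hQe]
    exact intervalIntegral.integral_hasDerivWithinAt_right (hint 0 le_rfl)
      ⟨Ici 0, Filter.mem_of_superset self_mem_nhdsWithin Ioi_subset_Ici_self,
        h2qc.aestronglyMeasurable measurableSet_Ici⟩
      ((h2qc 0 self_mem_Ici).mono Ioi_subset_Ici_self)
  have hQd : ∀ b : ℝ, 0 < b → HasDerivAt Q (2 * q b) b := by
    intro b hb
    rw [hQe]
    exact intervalIntegral.integral_hasDerivAt_right (hint b hb.le)
      ((h2qc.mono Ioi_subset_Ici_self).stronglyMeasurableAtFilter isOpen_Ioi b hb)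
      ((h2qc b hb.le).continuousAt (Ici_mem_nhds hb))
  have hQcont : ContinuousOn Q (Ici 0) := by
    intro x hx
    rcases eq_or_lt_of_le (mem_Ici.1 hx) with h | h
    · rw [← h]; exact hQd0.continuousWithinAt
    · exact ((hQd x h).continuousAt).continuousWithinAt
  have hηd : ∀ b : ℝ, 0 < b → HasDerivAt η (η' b) b := fun b hb =>
    (hη' b hb.le).hasDerivAt (Ici_mem_nhds hb)
  have hη'd : ∀ b : ℝ, 0 < b → HasDerivAt η' (η'' b) b := fun b hb =>
    (hη'' b hb.le).hasDerivAt (Ici_mem_nhds hb)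
  have hηcont : ContinuousOn η (Ici 0) := fun x hx => (hη' x hx).continuousWithinAt
  have hη''eq : ∀ x, 0 ≤ x → η'' x = 2 * q x * η' x - 2 * lam * η x := by
    intro x hx; have := hode x hx; linarith
  constructor
  · -- positivity implies strict monotonicity
    intro hpos
    set g : ℝ → ℝ := fun x => Real.exp (-Q x) * η' x with hgdef
    have hgd : ∀ b : ℝ, 0 < b →
        HasDerivAt g (-(2 * lam) * (Real.exp (-Q b) * η b)) b := by
      intro b hb
      have h1 := ((hQd b hb).neg.exp.mul (hη'd b hb))
      exact h1.congr_deriv (by simp only [Pi.neg_apply, hη''eq b hb.le]; ring)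
    have hgc : ContinuousOn g (Ioi 0) := fun x hx =>
      ((hgd x hx).continuousAt).continuousWithinAt
    have hgAnti : StrictAntiOn g (Ioi 0) := by
      apply strictAntiOn_of_deriv_neg (convex_Ioi 0) hgc
      intro x hx
      rw [interior_Ioi] at hx
      rw [(hgd x hx).deriv]
      have h1 : 0 < Real.exp (-Q x) * η x :=
        mul_pos (Real.exp_pos _) (hpos x hx)
      nlinarith
    have hη'pos : ∀ x : ℝ, 0 < x → 0 < η' x := by
      by_contra hcon
      push_neg at hcon
      obtain ⟨x₀, hx₀, hx₀le⟩ := hcon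
      set x₁ := x₀ + 1 with hx₁def
      have hx₁ : 0 < x₁ := by linarith
      set m := g x₁ with hmdef
      have hm : m < 0 := by
        have h1 : g x₁ < g x₀ := hgAnti (mem_Ioi.2 hx₀) (mem_Ioi.2 hx₁) (by linarith)
        have h2 : g x₀ ≤ 0 :=
          mul_nonpos_iff.2 (Or.inl ⟨(Real.exp_pos _).le, hx₀le⟩)
        linarith
      have hgle : ∀ x : ℝ, x₁ ≤ x → η' x ≤ m * Real.exp (Q x) := by
        intro x hx
        have h1 : g x ≤ m := by
          rcases eq_or_lt_of_le hx with h | h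
          · rw [← h]
          · exact (hgAnti (mem_Ioi.2 hx₁) (mem_Ioi.2 (hx₁.trans h)) h).le
        have h2 : Real.exp (-Q x) * η' x ≤ m := h1
        have he : (0:ℝ) < Real.exp (Q x) := Real.exp_pos _
        have h3 := mul_le_mul_of_nonneg_right h2 he.le
        calc η' x = Real.exp (-Q x) * η' x * Real.exp (Q x) := by
              rw [mul_comm (Real.exp (-Q x)) (η' x), mul_assoc, ← Real.exp_add]
              simp
          _ ≤ m * Real.exp (Q x) := h3
      set f : ℝ → ℝ := fun y => Real.exp (Q y) with hfdef
      have hfc : ContinuousOn f (Ioi 0) := fun x hx =>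
        (Real.continuous_exp.continuousAt.comp (hQd x hx).continuousAt).continuousWithinAt
      have hfint : ∀ b : ℝ, x₁ ≤ b → IntervalIntegrable f volume x₁ b := by
        intro b hb
        apply ContinuousOn.intervalIntegrable
        apply hfc.mono
        rw [uIcc_of_le hb]
        intro t ht
        exact lt_of_lt_of_le hx₁ ht.1
      set E : ℝ → ℝ := fun u => ∫ t in x₁..u, f t with hEdef
      have hEd : ∀ b : ℝ, x₁ ≤ b → HasDerivAt E (f b) b := by
        intro b hb
        have hb0 : 0 < b := lt_of_lt_of_le hx₁ hb
        exact intervalIntegral.integral_hasDerivAt_right (hfint b hb)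
          (hfc.stronglyMeasurableAtFilter isOpen_Ioi b hb0)
          (hfc.continuousAt (Ioi_mem_nhds hb0))
      have hHd : ∀ b : ℝ, x₁ ≤ b →
          HasDerivAt (fun u => η u - m * E u) (η' b - m * f b) b := fun b hb =>
        (hηd b (lt_of_lt_of_le hx₁ hb)).sub ((hEd b hb).const_mul m)
      have hHanti : AntitoneOn (fun u => η u - m * E u) (Ici x₁) := by
        apply antitoneOn_of_deriv_nonpos (convex_Ici x₁)
        · exact fun x hx => ((hHd x hx).continuousAt).continuousWithinAt
        · rw [interior_Ici]
          exact fun b hb => (hHd b (le_of_lt hb)).differentiableAt.differentiableWithinAt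
        · intro b hb
          rw [interior_Ici] at hb
          rw [(hHd b (le_of_lt hb)).deriv]
          have := hgle b (le_of_lt hb)
          linarith
      have hEbound : ∀ b : ℝ, x₁ ≤ b → (∫ t in x₁..b, ‖f t‖) ≤ η x₁ / (-m) := by
        intro b hb
        have h1 : η b - m * E b ≤ η x₁ - m * E x₁ :=
          hHanti self_mem_Ici hb hb
        have hEx₁ : E x₁ = 0 := intervalIntegral.integral_same
        have hηb : 0 < η b := hpos b (hx₁.trans_le hb)
        have hnorm : (∫ t in x₁..b, ‖f t‖) = E b := by
          apply intervalIntegral.integral_congr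
          intro t _
          exact Real.norm_of_nonneg (Real.exp_pos _).le
        rw [hnorm, le_div_iff₀ (by linarith : (0:ℝ) < -m)]
        nlinarith
      have hIntOn : IntegrableOn f (Ioi x₁) volume := by
        apply integrableOn_Ioi_of_intervalIntegral_norm_bounded (η x₁ / (-m)) x₁
          (b := fun n : ℕ => x₁ + n) (l := Filter.atTop)
        · intro n
          exact ((hfint (x₁ + n) (le_add_of_nonneg_right n.cast_nonneg)).1)
        · exact Filter.tendsto_atTop_add_const_left Filter.atTop x₁
            tendsto_natCast_atTop_atTop
        · exact Filter.Eventually.of_forall fun n =>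
            hEbound _ (le_add_of_nonneg_right n.cast_nonneg)
      have hfin1 : (∫⁻ y in Ioi x₁, ENNReal.ofReal (f y)) < ⊤ :=
        hIntOn.lintegral_lt_top
      have hIntOn2 : IntegrableOn f (Ioc 0 x₁) volume := by
        have hc : ContinuousOn f (Icc 0 x₁) :=
          Real.continuous_exp.comp_continuousOn (hQcont.mono Icc_subset_Ici_self)
        exact (hc.integrableOn_Icc).mono_set Ioc_subset_Icc_self
      have hfin2 : (∫⁻ y in Ioc 0 x₁, ENNReal.ofReal (f y)) < ⊤ :=
        hIntOn2.lintegral_lt_top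
      have hsplit : Ioi (0:ℝ) = Ioc 0 x₁ ∪ Ioi x₁ := (Ioc_union_Ioi_eq_Ioi hx₁.le).symm
      rw [hsplit, lintegral_union measurableSet_Ioi (Ioc_disjoint_Ioi le_rfl)] at hΛ
      exact (ENNReal.add_lt_top.2 ⟨hfin2, hfin1⟩).ne hΛ
    apply strictMonoOn_of_deriv_pos (convex_Ici 0) hηcont
    intro x hx
    rw [interior_Ici] at hx
    rw [(hηd x hx).deriv]
    exact hη'pos x hx
  · intro hmono x hx
    have := hmono self_mem_Ici (mem_Ici.2 hx.le) hx
    rwa [hη0] at this
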